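/- Let 1 < p ≤ 2 and q the conjugate exponent (1/p + 1/q = 1). Suppose (f̂(j,k)) ∈ l^q(ℤ×ℤ) with f̂(j,k) = 0 whenever 2j = ±k, and define û(j,k) = f̂(j,k)/(4j² − k²) for 2j ≠ ±k. Then for any 0 < γ < 1 − 1/p, the function u(x,t) = Σ_{2j≠±k} û(j,k) e^{2ijx} e^{ikt} belongs to the Hölder space C^γ on [0,π] × [0,2π], and ‖u‖_{C^γ} ≤ C(γ,p) ‖f̂‖_{l^q}. -/

import Mathlib

open scoped Real NNReal ENNReal

namespace Stmt3Aux

noncomputable def W (γ : ℝ) (jk : ℤ × ℤ) : ℝ :=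
  if 2 * jk.1 = jk.2 ∨ 2 * jk.1 = -jk.2 then 0
  else (2 * |(jk.1 : ℝ)| + |(jk.2 : ℝ)|) ^ γ / |4 * (jk.1 : ℝ) ^ 2 - (jk.2 : ℝ) ^ 2|

lemma W_nonneg (γ : ℝ) (jk : ℤ × ℤ) : 0 ≤ W γ jk := by
  unfold W; split
  · exact le_refl _
  · positivity

lemma rpow_add_le_add_rpow' {x y γ : ℝ} (hx : 0 ≤ x) (hy : 0 ≤ y) (h0 : 0 ≤ γ) (h1 : γ ≤ 1) :
    (x + y) ^ γ ≤ x ^ γ + y ^ γ := by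
  have h := NNReal.rpow_add_le_add_rpow x.toNNReal y.toNNReal h0 h1
  rw [← NNReal.coe_le_coe] at h
  push_cast at h
  rwa [Real.coe_toNNReal x hx, Real.coe_toNNReal y hy] at h

lemma exp_norm_one (θ : ℝ) : ‖Complex.exp (Complex.I * (θ : ℂ))‖ = 1 := by
  rw [Complex.norm_exp]
  simp

lemma exp_diff_le {γ : ℝ} (h0 : 0 < γ) (h1 : γ ≤ 1) (α β : ℝ) :
    ‖Complex.exp (Complex.I * (α : ℂ)) - Complex.exp (Complex.I * (β : ℂ))‖
      ≤ 2 * |α - β| ^ γ := by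
  rcases le_or_gt |α - β| 1 with hd | hd
  · rcases eq_or_lt_of_le (abs_nonneg (α - β)) with h0' | h0'
    · have hαβ : α = β := by
        have := abs_eq_zero.mp h0'.symm; linarith
      subst hαβ
      simp only [sub_self, norm_zero]
      positivity
    · have key : ‖Complex.exp (Complex.I * (α : ℂ)) - Complex.exp (Complex.I * (β : ℂ))‖
          ≤ 2 * |α - β| := by
        have hfac : Complex.exp (Complex.I * (α : ℂ)) - Complex.exp (Complex.I * (β : ℂ))
            = Complex.exp (Complex.I * (β : ℂ))
              * (Complex.exp (Complex.I * ((α - β : ℝ) : ℂ)) - 1) := by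
          rw [mul_sub, mul_one, ← Complex.exp_add]
          congr 2
          push_cast
          ring
        rw [hfac, norm_mul, exp_norm_one, one_mul]
        have habs : ‖Complex.I * ((α - β : ℝ) : ℂ)‖ = |α - β| := by
          rw [norm_mul, Complex.norm_I, one_mul, Complex.norm_real, Real.norm_eq_abs]
        have := Complex.norm_exp_sub_one_le (x := Complex.I * ((α - β : ℝ) : ℂ))
          (by rw [habs]; exact hd)
        rw [habs] at this
        exact this
      have hle : |α - β| ≤ |α - β| ^ γ := by
        calc |α - β| = |α - β| ^ (1 : ℝ) := (Real.rpow_one _).symm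
        _ ≤ |α - β| ^ γ := Real.rpow_le_rpow_of_exponent_ge h0' hd h1
      linarith
  · have h2 : ‖Complex.exp (Complex.I * (α : ℂ)) - Complex.exp (Complex.I * (β : ℂ))‖ ≤ 2 := by
      refine le_trans (norm_sub_le _ _) ?_
      rw [exp_norm_one, exp_norm_one]; norm_num
    have h3 : (1 : ℝ) ≤ |α - β| ^ γ := Real.one_le_rpow hd.le h0.le
    linarith

set_option maxHeartbeats 1000000 in
lemma summable_W_rpow {p γ : ℝ} (hp1 : 1 < p) (hγ0 : 0 < γ) (hγ : γ < 1 - 1 / p) :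
    Summable fun jk : ℤ × ℤ => W γ jk ^ p := by
  have hp0 : 0 < p := lt_trans one_pos hp1
  have hγ1 : γ < 1 := lt_of_lt_of_le hγ (by
    have : 0 < 1 / p := by positivity
    linarith)
  have hs : 1 < (1 - γ) * p := by
    have h1 : 1 / p < 1 - γ := by linarith
    calc (1 : ℝ) = (1 / p) * p := by field_simp
    _ < (1 - γ) * p := by
        apply mul_lt_mul_of_pos_right h1 hp0
  -- 1D summable pieces
  have sum1 : Summable fun n : ℤ => |(n : ℝ)| ^ ((γ - 1) * p) := by
    have := Real.summable_abs_int_rpow hs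
    convert this using 2 with n
    ring_nf
  have sum2 : Summable fun n : ℤ => |(n : ℝ)| ^ (-p) := Real.summable_abs_int_rpow hp1
  set A : ℤ × ℤ → ℝ := fun ab => |(ab.1 : ℝ)| ^ ((γ - 1) * p) * |(ab.2 : ℝ)| ^ (-p) with hA
  set B : ℤ × ℤ → ℝ := fun ab => |(ab.1 : ℝ)| ^ (-p) * |(ab.2 : ℝ)| ^ ((γ - 1) * p) with hB
  have sumA : Summable A :=
    Summable.mul_of_nonneg sum1 sum2 (fun n => Real.rpow_nonneg (abs_nonneg _) _)
      (fun n => Real.rpow_nonneg (abs_nonneg _) _)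
  have sumB : Summable B :=
    Summable.mul_of_nonneg sum2 sum1 (fun n => Real.rpow_nonneg (abs_nonneg _) _)
      (fun n => Real.rpow_nonneg (abs_nonneg _) _)
  set F : ℤ × ℤ → ℝ := fun ab =>
    |(ab.1 : ℝ)| ^ (γ - 1) * |(ab.2 : ℝ)| ^ (-1 : ℝ)
      + |(ab.1 : ℝ)| ^ (-1 : ℝ) * |(ab.2 : ℝ)| ^ (γ - 1) with hF
  have Fnn : ∀ ab, 0 ≤ F ab := fun ab => by
    have := abs_nonneg ((ab.1 : ℝ)); have := abs_nonneg ((ab.2 : ℝ)); positivity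
  have claim1 : ∀ ab : ℤ × ℤ, F ab ^ p ≤ 2 ^ p * (A ab + B ab) := by
    intro ab
    set x := |(ab.1 : ℝ)| ^ (γ - 1) * |(ab.2 : ℝ)| ^ (-1 : ℝ) with hx
    set y := |(ab.1 : ℝ)| ^ (-1 : ℝ) * |(ab.2 : ℝ)| ^ (γ - 1) with hy
    have hx0 : 0 ≤ x := by
      have := abs_nonneg ((ab.1 : ℝ)); have := abs_nonneg ((ab.2 : ℝ)); positivity
    have hy0 : 0 ≤ y := by
      have := abs_nonneg ((ab.1 : ℝ)); have := abs_nonneg ((ab.2 : ℝ)); positivity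
    have hxA : x ^ p = A ab := by
      rw [hx, hA, Real.mul_rpow (Real.rpow_nonneg (abs_nonneg _) _)
        (Real.rpow_nonneg (abs_nonneg _) _), ← Real.rpow_mul (abs_nonneg _),
        ← Real.rpow_mul (abs_nonneg _)]
      ring_nf
    have hyB : y ^ p = B ab := by
      rw [hy, hB, Real.mul_rpow (Real.rpow_nonneg (abs_nonneg _) _)
        (Real.rpow_nonneg (abs_nonneg _) _), ← Real.rpow_mul (abs_nonneg _),
        ← Real.rpow_mul (abs_nonneg _)]
      ring_nf
    have hmax : (x + y) ^ p ≤ 2 ^ p * (x ^ p + y ^ p) := by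
      rcases le_total x y with h | h
      · calc (x + y) ^ p ≤ (2 * y) ^ p := by
              apply Real.rpow_le_rpow (by linarith) (by linarith) hp0.le
        _ = 2 ^ p * y ^ p := Real.mul_rpow (by norm_num) hy0
        _ ≤ 2 ^ p * (x ^ p + y ^ p) := by
            have : 0 ≤ x ^ p := Real.rpow_nonneg hx0 _
            have h2 : (0:ℝ) < 2 ^ p := Real.rpow_pos_of_pos two_pos _
            nlinarith
      · calc (x + y) ^ p ≤ (2 * x) ^ p := by
              apply Real.rpow_le_rpow (by linarith) (by linarith) hp0.le
        _ = 2 ^ p * x ^ p := Real.mul_rpow (by norm_num) hx0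
        _ ≤ 2 ^ p * (x ^ p + y ^ p) := by
            have : 0 ≤ y ^ p := Real.rpow_nonneg hy0 _
            have h2 : (0:ℝ) < 2 ^ p := Real.rpow_pos_of_pos two_pos _
            nlinarith
    calc F ab ^ p = (x + y) ^ p := rfl
    _ ≤ 2 ^ p * (x ^ p + y ^ p) := hmax
    _ = 2 ^ p * (A ab + B ab) := by rw [hxA, hyB]
  have claim2 : Summable fun ab : ℤ × ℤ => F ab ^ p :=
    Summable.of_nonneg_of_le (fun ab => Real.rpow_nonneg (Fnn ab) _) claim1
      (((sumA.add sumB).mul_left (2 ^ p)))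
  set φ : ℤ × ℤ → ℤ × ℤ := fun jk => (2 * jk.1 - jk.2, 2 * jk.1 + jk.2) with hφ
  have φinj : Function.Injective φ := by
    rintro ⟨j, k⟩ ⟨j', k'⟩ h
    simp only [hφ, Prod.mk.injEq] at h ⊢
    omega
  have claim3 : ∀ jk : ℤ × ℤ, W γ jk ^ p ≤ F (φ jk) ^ p := by
    intro jk
    apply Real.rpow_le_rpow (W_nonneg _ _) _ hp0.le
    obtain ⟨j, k⟩ := jk
    unfold W
    split
    · exact Fnn _
    · rename_i hnc
      set a : ℤ := 2 * j - k with ha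
      set b : ℤ := 2 * j + k with hb
      have ha0 : a ≠ 0 := by omega
      have hb0 : b ≠ 0 := by omega
      have hra : (0 : ℝ) < |(a : ℝ)| := by
        rw [abs_pos]; exact_mod_cast ha0
      have hrb : (0 : ℝ) < |(b : ℝ)| := by
        rw [abs_pos]; exact_mod_cast hb0
      have hden : |4 * (j : ℝ) ^ 2 - (k : ℝ) ^ 2| = |(a : ℝ)| * |(b : ℝ)| := by
        rw [← abs_mul]
        congr 1
        push_cast [ha, hb]
        ring
      have hnum : 2 * |(j : ℝ)| + |(k : ℝ)| ≤ |(a : ℝ)| + |(b : ℝ)| := by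
        have e1 : 2 * (j : ℝ) = ((a : ℝ) + (b : ℝ)) / 2 := by push_cast [ha, hb]; ring
        have e2 : (k : ℝ) = ((b : ℝ) - (a : ℝ)) / 2 := by push_cast [ha, hb]; ring
        have i1 : 2 * |(j : ℝ)| ≤ (|(a : ℝ)| + |(b : ℝ)|) / 2 := by
          rw [← abs_two, ← abs_mul, e1, abs_div, abs_two]
          have := abs_add_le ((a : ℝ)) ((b : ℝ))
          linarith
        have i2 : |(k : ℝ)| ≤ (|(a : ℝ)| + |(b : ℝ)|) / 2 := by
          rw [e2, abs_div, abs_two]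
          have := abs_sub ((b : ℝ)) ((a : ℝ))
          linarith
        linarith
      calc (2 * |(j : ℝ)| + |(k : ℝ)|) ^ γ / |4 * (j : ℝ) ^ 2 - (k : ℝ) ^ 2|
          ≤ (|(a : ℝ)| + |(b : ℝ)|) ^ γ / (|(a : ℝ)| * |(b : ℝ)|) := by
            rw [hden]
            apply div_le_div_of_nonneg_right ?_ (by positivity)
            exact Real.rpow_le_rpow (by positivity) hnum hγ0.le
      _ ≤ (|(a : ℝ)| ^ γ + |(b : ℝ)| ^ γ) / (|(a : ℝ)| * |(b : ℝ)|) := by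
            apply div_le_div_of_nonneg_right ?_ (by positivity)
            exact rpow_add_le_add_rpow' (abs_nonneg _) (abs_nonneg _) hγ0.le hγ1.le
      _ = F (φ (j, k)) := by
            rw [hF]
            simp only [hφ, ← ha, ← hb]
            rw [Real.rpow_sub hra, Real.rpow_sub hrb, Real.rpow_one, Real.rpow_one,
              Real.rpow_neg_one, Real.rpow_neg_one]
            field_simp
  exact Summable.of_nonneg_of_le (fun jk => Real.rpow_nonneg (W_nonneg _ _) _) claim3
    (claim2.comp_injective φinj)

end Stmt3Aux

theorem stmt3 (p q γ : ℝ) (hp1 : 1 < p) (hp2 : p ≤ 2) (hpq : 1 / p + 1 / q = 1)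
    (hγ0 : 0 < γ) (hγ : γ < 1 - 1 / p) :
    ∃ C : ℝ, 0 < C ∧ ∀ (fhat : ℤ × ℤ → ℂ),
      (∀ jk : ℤ × ℤ, (2 * jk.1 = jk.2 ∨ 2 * jk.1 = -jk.2) → fhat jk = 0) →
      Summable (fun jk : ℤ × ℤ => ‖fhat jk‖ ^ q) →
      ∀ u : ℝ × ℝ → ℂ,
      (∀ x t : ℝ, u (x, t) =
        ∑' jk : ℤ × ℤ,
          (if 2 * jk.1 = jk.2 ∨ 2 * jk.1 = -jk.2 then 0
            else fhat jk / ((4 * jk.1 ^ 2 - jk.2 ^ 2 : ℤ) : ℂ)) *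
            Complex.exp (Complex.I * ((2 * (jk.1 : ℝ) * x + (jk.2 : ℝ) * t : ℝ) : ℂ))) →
      (∀ z : ℝ × ℝ, ‖u z‖ ≤ C * (∑' jk : ℤ × ℤ, ‖fhat jk‖ ^ q) ^ (1 / q)) ∧
      HolderOnWith (Real.toNNReal (C * (∑' jk : ℤ × ℤ, ‖fhat jk‖ ^ q) ^ (1 / q)))
        (Real.toNNReal γ) u (Set.Icc 0 π ×ˢ Set.Icc 0 (2 * π)) := by
  have hp0 : 0 < p := lt_trans one_pos hp1
  have hγ1 : γ ≤ 1 := by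
    have h1p : 0 < 1 / p := by positivity
    linarith
  have hpq' : Real.HolderConjugate p q := Real.holderConjugate_iff.mpr ⟨hp1, by rw [← one_div, ← one_div]; exact hpq⟩
  have hWsum := Stmt3Aux.summable_W_rpow hp1 hγ0 hγ
  set S : ℝ := (∑' jk : ℤ × ℤ, Stmt3Aux.W γ jk ^ p) ^ (1 / p) with hSdef
  have hS0 : 0 ≤ S :=
    Real.rpow_nonneg (tsum_nonneg fun jk => Real.rpow_nonneg (Stmt3Aux.W_nonneg _ _) _) _
  refine ⟨2 * (S + 1), by positivity, ?_⟩
  intro fhat hchar hqsum u hu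
  set N : ℝ := (∑' jk : ℤ × ℤ, ‖fhat jk‖ ^ q) ^ (1 / q) with hNdef
  have hN0 : 0 ≤ N :=
    Real.rpow_nonneg (tsum_nonneg fun jk => Real.rpow_nonneg (norm_nonneg _) _) _
  obtain ⟨hTsum, hT⟩ := Real.summable_and_inner_le_Lp_mul_Lq_tsum_of_nonneg hpq'
    (fun jk => Stmt3Aux.W_nonneg γ jk) (fun jk => norm_nonneg (fhat jk)) hWsum hqsum
  set T : ℝ := ∑' jk : ℤ × ℤ, Stmt3Aux.W γ jk * ‖fhat jk‖ with hTdef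
  have hT0 : 0 ≤ T :=
    tsum_nonneg fun jk => mul_nonneg (Stmt3Aux.W_nonneg _ _) (norm_nonneg _)
  have hTS : T ≤ S * N := hT
  set c : ℤ × ℤ → ℂ := fun jk =>
    if 2 * jk.1 = jk.2 ∨ 2 * jk.1 = -jk.2 then 0
    else fhat jk / ((4 * jk.1 ^ 2 - jk.2 ^ 2 : ℤ) : ℂ) with hc
  have fact2 : ∀ jk : ℤ × ℤ, ‖c jk‖ * (2 * |(jk.1 : ℝ)| + |(jk.2 : ℝ)|) ^ γ
      ≤ Stmt3Aux.W γ jk * ‖fhat jk‖ := by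
    intro jk
    by_cases hnc : 2 * jk.1 = jk.2 ∨ 2 * jk.1 = -jk.2
    · simp [hc, Stmt3Aux.W, hnc]
    · simp only [hc, Stmt3Aux.W, if_neg hnc]
      rw [norm_div]
      have hden : ‖((4 * jk.1 ^ 2 - jk.2 ^ 2 : ℤ) : ℂ)‖
          = |4 * (jk.1 : ℝ) ^ 2 - (jk.2 : ℝ) ^ 2| := by
        rw [show ((4 * jk.1 ^ 2 - jk.2 ^ 2 : ℤ) : ℂ)
            = ((4 * (jk.1 : ℝ) ^ 2 - (jk.2 : ℝ) ^ 2 : ℝ) : ℂ) by push_cast; ring,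
          Complex.norm_real, Real.norm_eq_abs]
      rw [hden]
      exact le_of_eq (by ring)
  have hone : ∀ jk : ℤ × ℤ, ¬(2 * jk.1 = jk.2 ∨ 2 * jk.1 = -jk.2) →
      (1 : ℝ) ≤ (2 * |(jk.1 : ℝ)| + |(jk.2 : ℝ)|) ^ γ := by
    intro jk h
    apply Real.one_le_rpow _ hγ0.le
    have hjk : jk.1 ≠ 0 ∨ jk.2 ≠ 0 := by omega
    have h1 : (1 : ℤ) ≤ 2 * |jk.1| + |jk.2| := by
      rcases hjk with h' | h'
      · have := Int.one_le_abs h'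
        have := abs_nonneg jk.2
        linarith
      · have := Int.one_le_abs h'
        have := abs_nonneg jk.1
        linarith
    calc (1 : ℝ) = ((1 : ℤ) : ℝ) := by norm_num
    _ ≤ ((2 * |jk.1| + |jk.2| : ℤ) : ℝ) := by exact_mod_cast h1
    _ = 2 * |(jk.1 : ℝ)| + |(jk.2 : ℝ)| := by push_cast; ring
  have fact1 : ∀ jk : ℤ × ℤ, ‖c jk‖ ≤ Stmt3Aux.W γ jk * ‖fhat jk‖ := by
    intro jk
    by_cases h : 2 * jk.1 = jk.2 ∨ 2 * jk.1 = -jk.2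
    · rw [hc]
      simp only [if_pos h, norm_zero]
      exact mul_nonneg (Stmt3Aux.W_nonneg _ _) (norm_nonneg _)
    · calc ‖c jk‖ = ‖c jk‖ * 1 := (mul_one _).symm
      _ ≤ ‖c jk‖ * (2 * |(jk.1 : ℝ)| + |(jk.2 : ℝ)|) ^ γ :=
          mul_le_mul_of_nonneg_left (hone jk h) (norm_nonneg _)
      _ ≤ Stmt3Aux.W γ jk * ‖fhat jk‖ := fact2 jk
  have hsummable : ∀ z : ℝ × ℝ, Summable fun jk : ℤ × ℤ =>
      c jk * Complex.exp (Complex.I *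
        ((2 * (jk.1 : ℝ) * z.1 + (jk.2 : ℝ) * z.2 : ℝ) : ℂ)) := by
    intro z
    apply Summable.of_norm_bounded hTsum
    intro jk
    rw [norm_mul, Stmt3Aux.exp_norm_one, mul_one]
    exact fact1 jk
  have hbound0 : ∀ z : ℝ × ℝ, ‖u z‖ ≤ T := by
    intro z
    rw [show u z = _ from hu z.1 z.2]
    exact tsum_of_norm_bounded hTsum.hasSum fun jk => by
      rw [norm_mul, Stmt3Aux.exp_norm_one, mul_one]; exact fact1 jk
  constructor
  · intro z
    refine (hbound0 z).trans ?_
    nlinarith [hTS, hS0, hN0]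
  · intro z1 hz1 z2 hz2
    have key : ‖u z1 - u z2‖ ≤ 2 * (S + 1) * N * dist z1 z2 ^ γ := by
      set d : ℝ := dist z1 z2 with hd
      have hd0 : 0 ≤ d := dist_nonneg
      rw [show u z1 = _ from hu z1.1 z1.2, show u z2 = _ from hu z2.1 z2.2,
        ← Summable.tsum_sub (hsummable z1) (hsummable z2)]
      have hb : ∀ jk : ℤ × ℤ,
          ‖c jk * Complex.exp (Complex.I *
              ((2 * (jk.1 : ℝ) * z1.1 + (jk.2 : ℝ) * z1.2 : ℝ) : ℂ))
            - c jk * Complex.exp (Complex.I *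
              ((2 * (jk.1 : ℝ) * z2.1 + (jk.2 : ℝ) * z2.2 : ℝ) : ℂ))‖
          ≤ 2 * d ^ γ * (Stmt3Aux.W γ jk * ‖fhat jk‖) := by
        intro jk
        rw [← mul_sub, norm_mul]
        set θ1 : ℝ := 2 * (jk.1 : ℝ) * z1.1 + (jk.2 : ℝ) * z1.2 with hθ1
        set θ2 : ℝ := 2 * (jk.1 : ℝ) * z2.1 + (jk.2 : ℝ) * z2.2 with hθ2
        have hθ : |θ1 - θ2| ≤ (2 * |(jk.1 : ℝ)| + |(jk.2 : ℝ)|) * d := by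
          have e : θ1 - θ2 = 2 * (jk.1 : ℝ) * (z1.1 - z2.1) + (jk.2 : ℝ) * (z1.2 - z2.2) := by
            rw [hθ1, hθ2]; ring
          rw [e]
          have d1 : |z1.1 - z2.1| ≤ d := by
            rw [← Real.dist_eq, hd, Prod.dist_eq]
            exact le_max_left _ _
          have d2 : |z1.2 - z2.2| ≤ d := by
            rw [← Real.dist_eq, hd, Prod.dist_eq]
            exact le_max_right _ _
          calc |2 * (jk.1 : ℝ) * (z1.1 - z2.1) + (jk.2 : ℝ) * (z1.2 - z2.2)|
              ≤ |2 * (jk.1 : ℝ) * (z1.1 - z2.1)| + |(jk.2 : ℝ) * (z1.2 - z2.2)| := abs_add_le _ _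
          _ = 2 * |(jk.1 : ℝ)| * |z1.1 - z2.1| + |(jk.2 : ℝ)| * |z1.2 - z2.2| := by
              rw [abs_mul, abs_mul, abs_mul, abs_two]
          _ ≤ 2 * |(jk.1 : ℝ)| * d + |(jk.2 : ℝ)| * d := by
              have h1 := abs_nonneg ((jk.1 : ℝ))
              have h2 := abs_nonneg ((jk.2 : ℝ))
              have h3 := abs_nonneg (z1.1 - z2.1)
              have h4 := abs_nonneg (z1.2 - z2.2)
              nlinarith
          _ = (2 * |(jk.1 : ℝ)| + |(jk.2 : ℝ)|) * d := by ring
        have hexp : ‖Complex.exp (Complex.I * (θ1 : ℂ)) - Complex.exp (Complex.I * (θ2 : ℂ))‖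
            ≤ 2 * ((2 * |(jk.1 : ℝ)| + |(jk.2 : ℝ)|) ^ γ * d ^ γ) := by
          refine (Stmt3Aux.exp_diff_le hγ0 hγ1 θ1 θ2).trans ?_
          rw [← Real.mul_rpow (by positivity) hd0]
          have := Real.rpow_le_rpow (abs_nonneg _) hθ hγ0.le
          linarith
        calc ‖c jk‖ * ‖Complex.exp (Complex.I * (θ1 : ℂ))
              - Complex.exp (Complex.I * (θ2 : ℂ))‖
            ≤ ‖c jk‖ * (2 * ((2 * |(jk.1 : ℝ)| + |(jk.2 : ℝ)|) ^ γ * d ^ γ)) :=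
              mul_le_mul_of_nonneg_left hexp (norm_nonneg _)
        _ = 2 * d ^ γ * (‖c jk‖ * (2 * |(jk.1 : ℝ)| + |(jk.2 : ℝ)|) ^ γ) := by ring
        _ ≤ 2 * d ^ γ * (Stmt3Aux.W γ jk * ‖fhat jk‖) := by
            have hdγ : 0 ≤ d ^ γ := Real.rpow_nonneg hd0 _
            exact mul_le_mul_of_nonneg_left (fact2 jk) (by positivity)
      refine (tsum_of_norm_bounded (hTsum.hasSum.mul_left (2 * d ^ γ)) hb).trans ?_
      have hdγ : 0 ≤ d ^ γ := Real.rpow_nonneg hd0 _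
      rw [← hTdef]
      nlinarith
    have hcoe : ((Real.toNNReal γ : ℝ≥0) : ℝ) = γ := Real.coe_toNNReal γ hγ0.le
    have hC0 : 0 ≤ 2 * (S + 1) * N := by positivity
    calc edist (u z1) (u z2) = ENNReal.ofReal (dist (u z1) (u z2)) := edist_dist _ _
    _ ≤ ENNReal.ofReal (2 * (S + 1) * N * dist z1 z2 ^ γ) := by
        apply ENNReal.ofReal_le_ofReal
        rw [dist_eq_norm]
        exact key
    _ = ENNReal.ofReal (2 * (S + 1) * N) * ENNReal.ofReal (dist z1 z2 ^ γ) := by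
        rw [ENNReal.ofReal_mul hC0]
    _ = ENNReal.ofReal (2 * (S + 1) * N) * ENNReal.ofReal (dist z1 z2) ^ γ := by
        rw [ENNReal.ofReal_rpow_of_nonneg dist_nonneg hγ0.le]
    _ = (Real.toNNReal (2 * (S + 1) * N) : ℝ≥0∞)
          * edist z1 z2 ^ ((Real.toNNReal γ : ℝ≥0) : ℝ) := by
        rw [hcoe, edist_dist]
        rfl
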